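/- The function g is well defined, continuous on [0,∞) (in particular continuous at the point 1), monotonically nonincreasing, and maps every dyadic rational in [0,∞) to a dyadic rational. -/

import Mathlib

/-- A real number is a dyadic rational if it has the form `m / 2^n`. -/
def IsDyadic (x : ℝ) : Prop := ∃ (m : ℤ) (n : ℕ), x = (m : ℝ) / 2 ^ n

/-- Affine interpolation on `[a,b]` with values `fa` at `a` and `fb` at `b`. -/
noncomputable def interp (a b fa fb x : ℝ) : ℝ := fa + (x - a) * (fb - fa) / (b - a)

/-- The breakpoints `d_i = 1 - 2^{-i}`. -/
noncomputable def dbk (i : ℕ) : ℝ := 1 - (2 : ℝ) ^ (-(i : ℤ))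

open Classical in
/-- `alpha i = max { j ≤ i : j = 2^(2^m) for some m }` (meaningful for `i ≥ 2`). -/
noncomputable def alpha (i : ℕ) : ℕ := Nat.findGreatest (fun j => ∃ m : ℕ, j = 2 ^ 2 ^ m) i

/-- The specification of the function `g` of the paper: `g = 1` on `[0, 1/2]`,
`g(d_i) = 1/log₂(α(i))` for `i ≥ 2`, `g` is affine on each `[d_i, d_{i+1}]` for `i ≥ 1`,
and `g = 0` on `[1, ∞)`. -/
noncomputable def SpecG (g : ℝ → ℝ) : Prop :=
  (∀ x ∈ Set.Icc (0 : ℝ) (1 / 2), g x = 1) ∧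
  (∀ i : ℕ, 2 ≤ i → g (dbk i) = 1 / Real.logb 2 (alpha i)) ∧
  (∀ i : ℕ, 1 ≤ i → ∀ x ∈ Set.Icc (dbk i) (dbk (i + 1)),
    g x = interp (dbk i) (dbk (i + 1)) (g (dbk i)) (g (dbk (i + 1))) x) ∧
  (∀ x ∈ Set.Ici (1 : ℝ), g x = 0)

namespace St6


def mm (i : ℕ) : ℕ := Nat.log 2 (Nat.log 2 i)

noncomputable def v (i : ℕ) : ℝ := (2:ℝ) ^ (-(mm i : ℤ))

lemma v_pos (i : ℕ) : 0 < v i := zpow_pos two_pos _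

lemma v_le_one (i : ℕ) : v i ≤ 1 := zpow_le_one_of_nonpos₀ one_le_two (by simp)

lemma v_one : v 1 = 1 := by norm_num [v, mm]

lemma v_anti : Antitone v := by
  intro i j h
  apply zpow_le_zpow_right₀ one_le_two
  have := Nat.log_mono_right (b := 2) (Nat.log_mono_right (b := 2) h)
  simp only [mm]
  omega

lemma alpha_eq (i : ℕ) (hi : 2 ≤ i) : alpha i = 2 ^ 2 ^ mm i := by
  have hi0 : i ≠ 0 := by omega
  have hlog1 : 1 ≤ Nat.log 2 i := by
    rw [Nat.le_log_iff_pow_le one_lt_two hi0]; simpa using hi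
  have hlog0 : Nat.log 2 i ≠ 0 := by omega
  classical
  rw [alpha, Nat.findGreatest_eq_iff]
  refine ⟨?_, fun _ => ⟨mm i, rfl⟩, ?_⟩
  · calc 2 ^ 2 ^ mm i ≤ 2 ^ Nat.log 2 i :=
          Nat.pow_le_pow_right (by norm_num) (Nat.pow_log_le_self 2 hlog0)
      _ ≤ i := Nat.pow_log_le_self 2 hi0
  · rintro k hk hki ⟨m, rfl⟩
    have h1 : 2 ^ m ≤ Nat.log 2 i := (Nat.le_log_iff_pow_le one_lt_two hi0).2 hki
    have h2 : m ≤ mm i := (Nat.le_log_iff_pow_le one_lt_two hlog0).2 h1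
    have : (2:ℕ) ^ 2 ^ m ≤ 2 ^ 2 ^ mm i :=
      Nat.pow_le_pow_right (by norm_num) (Nat.pow_le_pow_right (by norm_num) h2)
    omega

lemma logb_alpha (i : ℕ) (hi : 2 ≤ i) : 1 / Real.logb 2 (alpha i) = v i := by
  rw [alpha_eq i hi]
  push_cast
  rw [Real.logb_pow, Real.logb_self_eq_one (by norm_num), mul_one, v,
    zpow_neg, one_div, zpow_natCast]
  norm_cast

lemma dbk_strictMono : StrictMono dbk := by
  intro i j h
  have : (2:ℝ) ^ (-(j:ℤ)) < 2 ^ (-(i:ℤ)) :=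
    zpow_lt_zpow_right₀ one_lt_two (by omega)
  simp only [dbk]; linarith

lemma dbk_mono : Monotone dbk := dbk_strictMono.monotone

lemma dbk_one : dbk 1 = 1/2 := by norm_num [dbk]

lemma dbk_lt_one (i : ℕ) : dbk i < 1 := by
  have : (0:ℝ) < 2 ^ (-(i:ℤ)) := zpow_pos two_pos _
  simp only [dbk]; linarith

lemma half_le_dbk {i : ℕ} (hi : 1 ≤ i) : 1/2 ≤ dbk i := dbk_one ▸ dbk_mono hi

lemma dbk_succ_sub (i : ℕ) : dbk (i+1) - dbk i = (2:ℝ) ^ (-(i+1:ℤ)) := by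
  have h : (2:ℝ)^(-(i:ℤ)) = 2 * 2^(-(i:ℤ)-1) := by
    rw [mul_comm, ← zpow_add_one₀ (two_ne_zero (α := ℝ))]
    norm_num
  have h2 : (-(↑(i+1):ℤ)) = -(i:ℤ)-1 := by push_cast; ring
  have h3 : (-((i:ℤ)+1)) = -(i:ℤ)-1 := by ring
  simp only [dbk, h2, h3]
  linarith

noncomputable def idx (x : ℝ) : ℕ := (Int.log 2 (1 - x)⁻¹).toNat

lemma idx_eq {i : ℕ} {x : ℝ} (h1 : dbk i ≤ x) (h2 : x < dbk (i+1)) : idx x = i := by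
  have ht0 : 0 < 1 - x := by have := dbk_lt_one (i+1); linarith
  have hr0 : 0 < (1 - x)⁻¹ := inv_pos.2 ht0
  have ha : (2:ℝ) ^ (i:ℤ) ≤ (1 - x)⁻¹ := by
    rw [le_inv_comm₀ (zpow_pos two_pos _) ht0, ← zpow_neg]
    simp only [dbk] at h1; linarith
  have hb : (1 - x)⁻¹ < (2:ℝ) ^ ((i:ℤ)+1) := by
    rw [inv_lt_comm₀ ht0 (zpow_pos two_pos _), ← zpow_neg]
    simp only [dbk] at h2; push_cast at h2 ⊢; linarith
  have h3 : (i:ℤ) ≤ Int.log 2 (1-x)⁻¹ := by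
    refine (Int.zpow_le_iff_le_log one_lt_two hr0).1 ?_
    exact_mod_cast ha
  have h4 : Int.log 2 (1-x)⁻¹ < (i:ℤ) + 1 := by
    refine (Int.lt_zpow_iff_log_lt one_lt_two hr0).1 ?_
    exact_mod_cast hb
  simp only [idx]; omega

lemma idx_mem {x : ℝ} (h1 : 1/2 ≤ x) (h2 : x < 1) :
    1 ≤ idx x ∧ dbk (idx x) ≤ x ∧ x < dbk (idx x + 1) := by
  have ht0 : 0 < 1 - x := by linarith
  have hr0 : 0 < (1 - x)⁻¹ := inv_pos.2 ht0
  have h2r : (2:ℝ) ^ (1:ℤ) ≤ (1-x)⁻¹ := by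
    rw [le_inv_comm₀ (by norm_num) ht0]; norm_num; linarith
  have hL1 : (1:ℤ) ≤ Int.log 2 (1-x)⁻¹ := by
    refine (Int.zpow_le_iff_le_log one_lt_two hr0).1 ?_
    exact_mod_cast h2r
  have hidx : (idx x : ℤ) = Int.log 2 (1-x)⁻¹ := by simp only [idx]; omega
  refine ⟨by simp only [idx]; omega, ?_, ?_⟩
  · have := Int.zpow_log_le_self (b := 2) one_lt_two hr0
    rw [← hidx] at this
    have h5 : 1 - x ≤ (2:ℝ) ^ (-(idx x:ℤ)) := by
      rw [zpow_neg]
      exact (le_inv_comm₀ ht0 (zpow_pos two_pos _)).2 (by exact_mod_cast this)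
    simp only [dbk]; linarith
  · have := Int.lt_zpow_succ_log_self (b := 2) one_lt_two (1-x)⁻¹
    rw [← hidx] at this
    have h5 : (2:ℝ) ^ (-((idx x:ℤ)+1)) < 1 - x := by
      rw [zpow_neg]
      exact (inv_lt_comm₀ (zpow_pos two_pos _) ht0).2 (by exact_mod_cast this)
    simp only [dbk]; push_cast; linarith


noncomputable def G (x : ℝ) : ℝ :=
  if x < 1/2 then 1 else if 1 ≤ x then 0 else
  interp (dbk (idx x)) (dbk (idx x + 1)) (v (idx x)) (v (idx x + 1)) x

lemma interp_left (a b fa fb : ℝ) : interp a b fa fb a = fa := by simp [interp]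

lemma interp_right {a b : ℝ} (h : a ≠ b) (fa fb : ℝ) : interp a b fa fb b = fb := by
  have hba : b - a ≠ 0 := sub_ne_zero.2 (Ne.symm h)
  rw [interp]
  field_simp
  ring

lemma G_eq_interp {x : ℝ} (h1 : 1/2 ≤ x) (h2 : x < 1) :
    G x = interp (dbk (idx x)) (dbk (idx x + 1)) (v (idx x)) (v (idx x + 1)) x := by
  rw [G, if_neg (by linarith), if_neg (by linarith)]

lemma G_breakpoint {i : ℕ} (hi : 1 ≤ i) : G (dbk i) = v i := by
  have h1 : 1/2 ≤ dbk i := half_le_dbk hi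
  have h2 : dbk i < 1 := dbk_lt_one i
  have h3 : idx (dbk i) = i := idx_eq le_rfl (dbk_strictMono (Nat.lt_succ_self i))
  rw [G_eq_interp h1 h2, h3, interp_left]

lemma G_on {i : ℕ} (hi : 1 ≤ i) {x : ℝ} (hx : x ∈ Set.Icc (dbk i) (dbk (i+1))) :
    G x = interp (dbk i) (dbk (i+1)) (v i) (v (i+1)) x := by
  obtain ⟨hxl, hxr⟩ := hx
  rcases eq_or_lt_of_le hxr with heq | hlt
  · subst heq
    rw [G_breakpoint (by omega),
      interp_right (ne_of_lt (dbk_strictMono (Nat.lt_succ_self i)))]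
  · have h1 : 1/2 ≤ x := le_trans (half_le_dbk hi) hxl
    have h2 : x < 1 := lt_trans hlt (dbk_lt_one _)
    rw [G_eq_interp h1 h2, idx_eq hxl hlt]

lemma G_le_half {x : ℝ} (h : x ≤ 1/2) : G x = 1 := by
  rcases lt_or_eq_of_le h with h | h
  · rw [G, if_pos h]
  · subst h
    have := G_breakpoint (i := 1) le_rfl
    rw [dbk_one] at this
    rw [this, v_one]

lemma G_one_le {x : ℝ} (h : 1 ≤ x) : G x = 0 := by
  rw [G, if_neg (by linarith), if_pos h]

lemma specG_G : SpecG G := by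
  refine ⟨fun x hx => G_le_half hx.2, fun i hi => ?_, fun i hi x hx => ?_, fun x hx => G_one_le hx⟩
  · rw [G_breakpoint (by omega), ← logb_alpha i hi]
  · rw [G_on hi hx, G_breakpoint hi, G_breakpoint (by omega : 1 ≤ i+1)]


lemma spec_breakpoint {g : ℝ → ℝ} (hg : SpecG g) {i : ℕ} (hi : 1 ≤ i) : g (dbk i) = v i := by
  rcases eq_or_lt_of_le hi with h | h
  · rw [← h, dbk_one, hg.1 (1/2) ⟨by norm_num, le_rfl⟩, ← v_one]
  · rw [hg.2.1 i h, logb_alpha i h]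

lemma spec_unique {g₁ g₂ : ℝ → ℝ} (h₁ : SpecG g₁) (h₂ : SpecG g₂) :
    Set.EqOn g₁ g₂ (Set.Ici 0) := by
  intro x hx
  rcases le_or_gt x (1/2) with h | h
  · rw [h₁.1 x ⟨hx, h⟩, h₂.1 x ⟨hx, h⟩]
  rcases le_or_gt 1 x with h1 | h1
  · rw [h₁.2.2.2 x h1, h₂.2.2.2 x h1]
  · obtain ⟨hi1, hl, hr⟩ := idx_mem h.le h1
    have hmem : x ∈ Set.Icc (dbk (idx x)) (dbk (idx x + 1)) := ⟨hl, hr.le⟩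
    rw [h₁.2.2.1 _ hi1 x hmem, h₂.2.2.1 _ hi1 x hmem,
      spec_breakpoint h₁ hi1, spec_breakpoint h₂ hi1,
      spec_breakpoint h₁ (i := idx x + 1) (by omega),
      spec_breakpoint h₂ (i := idx x + 1) (by omega)]

lemma interp_anti {a b fa fb : ℝ} (hab : a < b) (hf : fb ≤ fa) :
    Antitone (interp a b fa fb) := by
  intro x y hxy
  simp only [interp]
  have hc : (fb - fa) / (b - a) ≤ 0 :=
    div_nonpos_of_nonpos_of_nonneg (by linarith) (by linarith)
  have := mul_le_mul_of_nonpos_right (sub_le_sub_right hxy a) hc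
  rw [mul_div_assoc, mul_div_assoc]
  linarith

lemma interp_mem {a b fa fb x : ℝ} (hab : a < b) (hf : fb ≤ fa)
    (hx : x ∈ Set.Icc a b) : interp a b fa fb x ∈ Set.Icc fb fa := by
  constructor
  · have := interp_anti hab hf hx.2
    rwa [interp_right hab.ne] at this
  · have := interp_anti hab hf hx.1
    rwa [interp_left] at this

lemma G_mem {x : ℝ} (h1 : 1/2 ≤ x) (h2 : x < 1) :
    G x ∈ Set.Icc (v (idx x + 1)) (v (idx x)) := by
  obtain ⟨hi1, hl, hr⟩ := idx_mem h1 h2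
  rw [G_on hi1 ⟨hl, hr.le⟩]
  exact interp_mem (dbk_strictMono (Nat.lt_succ_self _)) (v_anti (Nat.le_succ _)) ⟨hl, hr.le⟩

lemma G_nonneg (x : ℝ) : 0 ≤ G x := by
  rcases le_or_gt x (1/2) with h | h
  · rw [G_le_half h]; norm_num
  rcases le_or_gt 1 x with h1 | h1
  · rw [G_one_le h1]
  · exact le_trans (v_pos _).le (G_mem h.le h1).1

lemma G_le_one (x : ℝ) : G x ≤ 1 := by
  rcases le_or_gt x (1/2) with h | h
  · rw [G_le_half h]
  rcases le_or_gt 1 x with h1 | h1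
  · rw [G_one_le h1]; norm_num
  · exact le_trans (G_mem h.le h1).2 (v_le_one _)

lemma G_anti : AntitoneOn G (Set.Ici 0) := by
  intro x _ y _ hxy
  rcases le_or_gt 1 y with hy1 | hy1
  · rw [G_one_le hy1]; exact G_nonneg x
  rcases le_or_gt x (1/2) with hx2 | hx2
  · rw [G_le_half hx2]; exact G_le_one y
  · have hx1 : x < 1 := lt_of_le_of_lt hxy hy1
    have hyh : (1:ℝ)/2 ≤ y := by linarith
    obtain ⟨hi1, hxl, hxr⟩ := idx_mem hx2.le hx1
    obtain ⟨hj1, hyl, hyr⟩ := idx_mem hyh hy1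
    have hij : idx x ≤ idx y := by
      have h := dbk_strictMono.lt_iff_lt.1 (lt_of_le_of_lt (le_trans hxl hxy) hyr)
      omega
    rcases eq_or_lt_of_le hij with he | hlt
    · have hy' : y ∈ Set.Icc (dbk (idx x)) (dbk (idx x + 1)) := by
        rw [he]; exact ⟨hyl, hyr.le⟩
      rw [G_on hi1 ⟨hxl, hxr.le⟩, G_on hi1 hy']
      exact interp_anti (dbk_strictMono (Nat.lt_succ_self _)) (v_anti (Nat.le_succ _)) hxy
    · have h1 : G y ≤ v (idx y) := (G_mem hyh hy1).2
      have h2 : v (idx x + 1) ≤ G x := (G_mem hx2.le hx1).1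
      have h3 : v (idx y) ≤ v (idx x + 1) := v_anti (by omega)
      linarith


lemma continuous_interp (a b fa fb : ℝ) : Continuous (interp a b fa fb) := by
  unfold interp
  fun_prop

lemma v_small {ε : ℝ} (hε : 0 < ε) : ∃ k : ℕ, 1 ≤ k ∧ v k < ε := by
  obtain ⟨N, hN⟩ := exists_pow_lt_of_lt_one hε (by norm_num : (1:ℝ)/2 < 1)
  refine ⟨2 ^ 2 ^ N, Nat.one_le_two_pow, ?_⟩
  have hm : mm (2 ^ 2 ^ N) = N := by
    rw [mm, Nat.log_pow one_lt_two, Nat.log_pow one_lt_two]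
  rw [v, hm]
  calc (2:ℝ)^(-(N:ℤ)) = (1/2)^N := by
        rw [zpow_neg, zpow_natCast, one_div, inv_pow]
    _ < ε := hN

lemma continuousAt_G (x : ℝ) : ContinuousAt G x := by
  rcases lt_or_ge x (1/2) with h | h
  · exact continuousAt_const.congr (by
      filter_upwards [Iio_mem_nhds h] with y hy
      exact (G_le_half (le_of_lt hy)).symm)
  rcases lt_or_ge 1 x with h1 | h1
  · exact continuousAt_const.congr (by
      filter_upwards [Ioi_mem_nhds h1] with y hy
      exact (G_one_le (le_of_lt hy)).symm)
  rcases eq_or_lt_of_le h1 with heq | h1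
  · -- x = 1
    subst heq
    rw [Metric.continuousAt_iff]
    intro ε hε
    obtain ⟨k, hk1, hkε⟩ := v_small hε
    refine ⟨1 - dbk k, by have := dbk_lt_one k; linarith, fun {y} hy => ?_⟩
    rw [Real.dist_eq] at hy ⊢
    rw [G_one_le le_rfl, sub_zero]
    have hyk : dbk k < y := by rw [abs_lt] at hy; linarith
    rcases le_or_gt 1 y with hy1 | hy1
    · rw [G_one_le hy1]; simpa using hε
    · have hyh : 1/2 ≤ y := le_trans (half_le_dbk hk1) hyk.le
      obtain ⟨hi1, hyl, hyr⟩ := idx_mem hyh hy1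
      have hki : k ≤ idx y := by
        have := dbk_strictMono.lt_iff_lt.1 (lt_trans hyk hyr)
        omega
      have hb : G y ≤ v k := le_trans (G_mem hyh hy1).2 (v_anti hki)
      rw [abs_of_nonneg (G_nonneg y)]
      linarith
  · -- 1/2 ≤ x < 1
    obtain ⟨hi1, hxl, hxr⟩ := idx_mem h h1
    rcases eq_or_lt_of_le hxl with heq | hlt
    · -- x = dbk (idx x)
      set i := idx x with hidef
      have hR : ContinuousWithinAt G (Set.Ici x) x := by
        refine ContinuousWithinAt.congr_of_eventuallyEq
          ((continuous_interp (dbk i) (dbk (i+1)) (v i) (v (i+1))).continuousAt.continuousWithinAt)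
          ?_ ?_
        · filter_upwards [self_mem_nhdsWithin,
            mem_nhdsWithin_of_mem_nhds (Iio_mem_nhds hxr)] with y hy1 hy2
          exact G_on hi1 ⟨heq ▸ hy1, le_of_lt hy2⟩
        · exact G_on hi1 ⟨hxl, hxr.le⟩
      have hL : ContinuousWithinAt G (Set.Iic x) x := by
        rcases eq_or_lt_of_le hi1 with hi1' | hi2
        · -- i = 1, x = 1/2
          have hx2 : x = 1/2 := by rw [← heq, ← hi1', dbk_one]
          refine (continuousWithinAt_const (b := (1:ℝ))).congr_of_eventuallyEq ?_ ?_
          · filter_upwards [self_mem_nhdsWithin] with y hy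
            exact G_le_half (le_trans hy hx2.le)
          · exact G_le_half hx2.le
        · -- i ≥ 2
          obtain ⟨j, hj⟩ : ∃ j, i = j + 1 := ⟨i - 1, by omega⟩
          have hj1 : 1 ≤ j := by omega
          have hdj : dbk j < x := by
            rw [← heq, hj]; exact dbk_strictMono (Nat.lt_succ_self j)
          refine ContinuousWithinAt.congr_of_eventuallyEq
            ((continuous_interp (dbk j) (dbk (j+1)) (v j) (v (j+1))).continuousAt.continuousWithinAt)
            ?_ ?_
          · filter_upwards [self_mem_nhdsWithin,
              mem_nhdsWithin_of_mem_nhds (Ioi_mem_nhds hdj)] with y hy1 hy2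
            exact G_on hj1 ⟨le_of_lt hy2, le_trans hy1 (le_of_eq (by rw [← heq, hj]))⟩
          · exact G_on hj1 ⟨hdj.le, le_of_eq (by rw [← heq, hj])⟩
      have := hL.union hR
      rwa [Set.Iic_union_Ici, continuousWithinAt_univ] at this
    · -- dbk (idx x) < x < dbk (idx x + 1)
      refine ((continuous_interp (dbk (idx x)) (dbk (idx x + 1)) (v (idx x))
        (v (idx x + 1))).continuousAt).congr ?_
      filter_upwards [Ioo_mem_nhds hlt hxr] with y hy
      exact (G_on hi1 ⟨hy.1.le, hy.2.le⟩).symm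

lemma continuous_G : Continuous G := continuous_iff_continuousAt.2 continuousAt_G


lemma dyadic_add {x y : ℝ} : IsDyadic x → IsDyadic y → IsDyadic (x + y) := by
  rintro ⟨m1, n1, rfl⟩ ⟨m2, n2, rfl⟩
  refine ⟨m1 * 2 ^ n2 + m2 * 2 ^ n1, n1 + n2, ?_⟩
  have h1 : ((2:ℝ) ^ n1) ≠ 0 := by positivity
  have h2 : ((2:ℝ) ^ n2) ≠ 0 := by positivity
  rw [div_add_div _ _ h1 h2]
  push_cast
  rw [pow_add]
  ring

lemma dyadic_neg {x : ℝ} : IsDyadic x → IsDyadic (-x) := by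
  rintro ⟨m, n, rfl⟩
  exact ⟨-m, n, by push_cast; ring⟩

lemma dyadic_sub {x y : ℝ} (hx : IsDyadic x) (hy : IsDyadic y) : IsDyadic (x - y) := by
  rw [sub_eq_add_neg]; exact dyadic_add hx (dyadic_neg hy)

lemma dyadic_mul {x y : ℝ} : IsDyadic x → IsDyadic y → IsDyadic (x * y) := by
  rintro ⟨m1, n1, rfl⟩ ⟨m2, n2, rfl⟩
  refine ⟨m1 * m2, n1 + n2, ?_⟩
  push_cast
  rw [pow_add]
  ring

lemma isDyadic_one : IsDyadic 1 := ⟨1, 0, by norm_num⟩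

lemma isDyadic_zero : IsDyadic 0 := ⟨0, 0, by norm_num⟩

lemma isDyadic_zpow (k : ℤ) : IsDyadic ((2:ℝ) ^ k) := by
  rcases k with n | n
  · exact ⟨2 ^ n, 0, by rw [Int.ofNat_eq_coe, zpow_natCast]; push_cast; norm_num⟩
  · exact ⟨1, n + 1, by rw [zpow_negSucc]; norm_num⟩

lemma isDyadic_v (i : ℕ) : IsDyadic (v i) := isDyadic_zpow _

lemma isDyadic_dbk (i : ℕ) : IsDyadic (dbk i) := dyadic_sub isDyadic_one (isDyadic_zpow _)

lemma G_dyadic {x : ℝ} (hx : IsDyadic x) : IsDyadic (G x) := by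
  rcases le_or_gt x (1/2) with h | h
  · rw [G_le_half h]; exact isDyadic_one
  rcases le_or_gt 1 x with h1 | h1
  · rw [G_one_le h1]; exact isDyadic_zero
  obtain ⟨hi1, hl, hr⟩ := idx_mem h.le h1
  rw [G_on hi1 ⟨hl, hr.le⟩, interp, dbk_succ_sub (idx x), div_eq_mul_inv, ← zpow_neg, neg_neg]
  exact dyadic_add (isDyadic_v _) (dyadic_mul (dyadic_mul (dyadic_sub hx (isDyadic_dbk _))
    (dyadic_sub (isDyadic_v _) (isDyadic_v _))) (isDyadic_zpow _))

end St6

/-- `g` is well defined (a function satisfying the specification exists and is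
uniquely determined on `[0,∞)`), continuous on `[0,∞)` (in particular continuous at `1`),
monotonically nonincreasing, and maps every dyadic rational in `[0,∞)` to a dyadic rational. -/
theorem statement6 :
    ∃ g : ℝ → ℝ, SpecG g ∧
      (∀ g' : ℝ → ℝ, SpecG g' → Set.EqOn g g' (Set.Ici 0)) ∧
      ContinuousOn g (Set.Ici 0) ∧
      ContinuousAt g 1 ∧
      AntitoneOn g (Set.Ici 0) ∧
      (∀ x : ℝ, 0 ≤ x → IsDyadic x → IsDyadic (g x)) :=
  ⟨St6.G, St6.specG_G, fun _ hg' => St6.spec_unique St6.specG_G hg',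
    St6.continuous_G.continuousOn, St6.continuousAt_G 1, St6.G_anti,
    fun _ _ hx => St6.G_dyadic hx⟩
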